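/- For n ≥ 3, the real Lie algebra so(n) of real skew-symmetric n×n matrices (with bracket the matrix commutator) has no essential elements. -/

import Mathlib

open Matrix

attribute [local instance 100] LieRing.ofAssociativeRing

/-- The linear span of all brackets `⁅a, b⁆` with `a ∈ A`, `b ∈ B`. -/
def bracketSpan {L : Type*} [LieRing L] [LieAlgebra ℝ L] (A B : Submodule ℝ L) :
    Submodule ℝ L :=
  Submodule.span ℝ {x | ∃ a ∈ A, ∃ b ∈ B, x = ⁅a, b⁆}

/-- `m` is essential: `ad m` is diagonalizable over `ℝ` and
`ℝ·m + [m,g] + [[m,g],[m,g]] = g`. -/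
def Essential {L : Type*} [LieRing L] [LieAlgebra ℝ L] (m : L) : Prop :=
  (⨆ c : ℝ, (LieAlgebra.ad ℝ L m).eigenspace c) = ⊤ ∧
    Submodule.span ℝ {m} ⊔ LinearMap.range (LieAlgebra.ad ℝ L m) ⊔
      bracketSpan (LinearMap.range (LieAlgebra.ad ℝ L m))
        (LinearMap.range (LieAlgebra.ad ℝ L m)) = ⊤

/-- `so(n)`: the real Lie algebra of skew-symmetric `n × n` real matrices. -/
def soLie (n : ℕ) : LieSubalgebra ℝ (Matrix (Fin n) (Fin n) ℝ) where
  carrier := {X | Xᵀ = -X}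
  zero_mem' := by simp
  add_mem' := by
    intro a b ha hb
    simp only [Set.mem_setOf_eq] at ha hb ⊢
    rw [transpose_add, ha, hb, neg_add]
  smul_mem' := by
    intro r X hX
    simp only [Set.mem_setOf_eq] at hX ⊢
    rw [transpose_smul, hX, smul_neg]
  lie_mem' := by
    intro X Y hX hY
    simp only [Set.mem_setOf_eq] at hX hY ⊢
    rw [Ring.lie_def, transpose_sub, transpose_mul, transpose_mul, hX, hY,
      neg_mul_neg, neg_mul_neg, neg_sub]

lemma skew_inv {n : ℕ} (m X Y : Matrix (Fin n) (Fin n) ℝ) (hm : mᵀ = -m) :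
    Matrix.trace ((m*X - X*m)ᵀ * Y) = - Matrix.trace (Xᵀ * (m*Y - Y*m)) := by
  rw [transpose_sub, transpose_mul, transpose_mul, hm]
  simp only [sub_mul, mul_sub, Matrix.trace_sub, Matrix.neg_mul, Matrix.mul_neg,
    Matrix.trace_neg, Matrix.mul_assoc]
  rw [Matrix.trace_mul_comm m (Xᵀ * Y), Matrix.mul_assoc]
  ring

lemma trace_self_zero {n : ℕ} (v : Matrix (Fin n) (Fin n) ℝ)
    (h : Matrix.trace (vᵀ * v) = 0) : v = 0 := by
  have h2 : ∑ j, ∑ i, v i j * v i j = 0 := by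
    rw [← h]; simp [Matrix.trace, Matrix.mul_apply, Matrix.diag]
  ext i j
  have := (Finset.sum_eq_zero_iff_of_nonneg (fun j _ => Finset.sum_nonneg
    (fun i _ => mul_self_nonneg (v i j)))).mp h2 j (Finset.mem_univ j)
  have := (Finset.sum_eq_zero_iff_of_nonneg (fun i _ => mul_self_nonneg (v i j))).mp this i
    (Finset.mem_univ i)
  simpa [mul_self_eq_zero] using this

lemma skew_elem {n : ℕ} (i j : Fin n) :
    (Matrix.single i j (1:ℝ) - Matrix.single j i 1)ᵀ
      = -(Matrix.single i j (1:ℝ) - Matrix.single j i 1) := by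
  ext a b
  simp only [transpose_apply, Matrix.sub_apply, Matrix.neg_apply, Matrix.single, of_apply]
  by_cases h1 : i = a <;> by_cases h2 : j = b <;> by_cases h3 : i = b <;> by_cases h4 : j = a <;>
    simp [h1, h2, h3, h4, and_comm]

lemma step2 (n : ℕ) (hn : 3 ≤ n) (m : soLie n)
    (hspan : Submodule.span ℝ {m} = ⊤) : False := by
  set i0 : Fin n := ⟨0, by omega⟩ with hi0
  set i1 : Fin n := ⟨1, by omega⟩ with hi1
  set i2 : Fin n := ⟨2, by omega⟩ with hi2
  have h01 : i0 ≠ i1 := by simp [hi0, hi1, Fin.ext_iff]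
  have h02 : i0 ≠ i2 := by simp [hi0, hi2, Fin.ext_iff]
  have h12 : i1 ≠ i2 := by simp [hi1, hi2, Fin.ext_iff]
  have hA : (Matrix.single i0 i1 (1:ℝ) - Matrix.single i1 i0 1) ∈ soLie n :=
    skew_elem i0 i1
  have hB : (Matrix.single i0 i2 (1:ℝ) - Matrix.single i2 i0 1) ∈ soLie n :=
    skew_elem i0 i2
  have hAmem : (⟨_, hA⟩ : soLie n) ∈ Submodule.span ℝ {m} := by rw [hspan]; trivial
  have hBmem : (⟨_, hB⟩ : soLie n) ∈ Submodule.span ℝ {m} := by rw [hspan]; trivial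
  obtain ⟨c, hc⟩ := Submodule.mem_span_singleton.mp hAmem
  obtain ⟨d, hd⟩ := Submodule.mem_span_singleton.mp hBmem
  have hcv : c • m.val = Matrix.single i0 i1 (1:ℝ) - Matrix.single i1 i0 1 :=
    congrArg Subtype.val hc
  have hdv : d • m.val = Matrix.single i0 i2 (1:ℝ) - Matrix.single i2 i0 1 :=
    congrArg Subtype.val hd
  have hc' : c * m.val i0 i1 = 1 := by
    have := congrFun (congrFun hcv i0) i1
    simpa [Matrix.single, h01, h01.symm, (h01.symm : i1 ≠ i0)] using this
  have hc'' : d * m.val i0 i1 = 0 ∨ True := Or.inr trivial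
  have hcd : d = 0 ∨ m.val i0 i1 = 0 := by
    have := congrFun (congrFun hdv i0) i1
    simpa [Matrix.single, Ne.symm h12, Ne.symm h02, h01] using this
  have hd' : d * m.val i0 i2 = 1 := by
    have := congrFun (congrFun hdv i0) i2
    simpa [Matrix.single, h02, Ne.symm h02] using this
  have hm1 : m.val i0 i1 ≠ 0 := fun h => by simp [h] at hc'
  have hd0 : d = 0 := by
    rcases hcd with h | h
    · exact h
    · exact absurd h hm1
  rw [hd0, zero_mul] at hd'
  exact one_ne_zero hd'.symm

/-- For `n ≥ 3`, the real Lie algebra `so(n)` has no essential elements. -/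
theorem soLie_no_essential (n : ℕ) (hn : 3 ≤ n) : ∀ m : soLie n, ¬ Essential m := by
  intro m ⟨hdiag, hspan⟩
  -- Step 1: ad m = 0
  have had : ∀ x : soLie n, ⁅m, x⁆ = 0 := by
    have h1 : ∀ c : ℝ, (LieAlgebra.ad ℝ (soLie n) m).eigenspace c ≤
        LinearMap.ker (LieAlgebra.ad ℝ (soLie n) m) := by
      intro c v hv
      rw [Module.End.mem_eigenspace_iff] at hv
      rw [LinearMap.mem_ker, LieAlgebra.ad_apply]
      have hv' : ⁅m, v⁆ = c • v := hv
      have hmat : m.val * v.val - v.val * m.val = c • v.val := by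
        have := congrArg Subtype.val hv'
        simpa [Ring.lie_def] using this
      rcases eq_or_ne c 0 with hc | hc
      · rw [hv', hc, zero_smul]
      · have hL := skew_inv m.val v.val v.val m.2
        rw [hmat] at hL
        have : c * Matrix.trace (v.valᵀ * v.val) = - (c * Matrix.trace (v.valᵀ * v.val)) := by
          simpa [Matrix.mul_smul, Matrix.smul_mul, Matrix.transpose_smul] using hL
        have hct : c * Matrix.trace (v.valᵀ * v.val) = 0 := by linarith
        have ht : Matrix.trace (v.valᵀ * v.val) = 0 := by
          rcases mul_eq_zero.mp hct with h | h
          · exact absurd h hc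
          · exact h
        have hv0 : v = 0 := Subtype.ext (trace_self_zero v.val ht)
        rw [hv0, lie_zero]
    have htop : (⊤ : Submodule ℝ (soLie n)) ≤
        LinearMap.ker (LieAlgebra.ad ℝ (soLie n) m) := hdiag ▸ iSup_le h1
    intro x
    have := htop (Submodule.mem_top (x := x))
    rwa [LinearMap.mem_ker, LieAlgebra.ad_apply] at this
  have hrange : LinearMap.range (LieAlgebra.ad ℝ (soLie n) m) = ⊥ := by
    rw [LinearMap.range_eq_bot]
    exact LinearMap.ext fun x => by simpa [LieAlgebra.ad_apply] using had x
  have hbr : bracketSpan (⊥ : Submodule ℝ (soLie n)) ⊥ = ⊥ := by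
    rw [bracketSpan, Submodule.span_eq_bot]
    rintro x ⟨a, ha, b, hb, rfl⟩
    rw [Submodule.mem_bot] at ha
    rw [ha, zero_lie]
  rw [hrange, hbr] at hspan
  simp only [sup_bot_eq] at hspan
  exact step2 n hn m hspan
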